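/- For any N ≥ 2, the collection of non-empty compact subsets of ℝ^N that are in general position (every set of d+1 pairwise distinct points with d ≤ N is affinely independent) is a dense G_δ subset of the hyperspace K(ℝ^N) with the Hausdorff metric. -/

import Mathlib

open TopologicalSpace Metric Set MeasureTheory

namespace StmtAux

variable {N : ℕ}

local notation "E" => EuclideanSpace ℝ (Fin N)

lemma isOpen_affInd (N m : ℕ) :
    IsOpen {p : Fin (m+1) → EuclideanSpace ℝ (Fin N) | AffineIndependent ℝ p} := by
  have h : {p : Fin (m+1) → EuclideanSpace ℝ (Fin N) | AffineIndependent ℝ p}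
      = (fun (p : Fin (m+1) → EuclideanSpace ℝ (Fin N)) (i : {x : Fin (m+1) // x ≠ 0}) =>
          p i -ᵥ p 0) ⁻¹'
        {f : {x : Fin (m+1) // x ≠ 0} → EuclideanSpace ℝ (Fin N) | LinearIndependent ℝ f} := by
    ext p; exact affineIndependent_iff_linearIndependent_vsub ℝ p 0
  rw [h]
  apply IsOpen.preimage ?_ isOpen_setOf_linearIndependent
  exact continuous_pi fun i => (continuous_apply (i : Fin (m+1))).vsub (continuous_apply 0)

/-- The "bad" sets. -/
def Bad (N d n : ℕ) : Set (NonemptyCompacts (EuclideanSpace ℝ (Fin N))) :=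
  {K | ∃ A : Fin (d + 1) → EuclideanSpace ℝ (Fin N),
    (∀ i j, i ≠ j → 1 / ((n : ℝ) + 1) ≤ dist (A i) (A j)) ∧
    (∀ m, A m ∈ (K : Set (EuclideanSpace ℝ (Fin N)))) ∧ ¬ AffineIndependent ℝ A}

lemma isClosed_bad (N d n : ℕ) : IsClosed (Bad N d n) := by
  rw [← isSeqClosed_iff_isClosed]
  intro Ks K hKs hlim
  choose A hA1 hA2 hA3 using hKs
  have hε : Filter.Tendsto (fun k => dist (Ks k) K) Filter.atTop (nhds 0) :=
    tendsto_iff_dist_tendsto_zero.1 hlim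
  obtain ⟨C, hC⟩ := hε.bddAbove_range
  have hCb : ∀ k, dist (Ks k) K ≤ C := fun k => hC (mem_range_self k)
  have hfin : ∀ k, EMetric.hausdorffEdist ((Ks k) : Set (EuclideanSpace ℝ (Fin N)))
      (K : Set (EuclideanSpace ℝ (Fin N))) ≠ ⊤ := fun k =>
    hausdorffEdist_ne_top_of_nonempty_of_bounded (Ks k).nonempty K.nonempty
      (Ks k).isCompact.isBounded K.isCompact.isBounded
  have hmem : ∀ k i, A k i ∈ cthickening C (K : Set (EuclideanSpace ℝ (Fin N))) := by
    intro k i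
    obtain ⟨z, hz, hzd⟩ := K.isCompact.exists_infDist_eq_dist K.nonempty (A k i)
    refine mem_cthickening_of_dist_le _ z C _ hz ?_
    rw [← hzd]
    calc infDist (A k i) (K : Set (EuclideanSpace ℝ (Fin N)))
        ≤ hausdorffDist ((Ks k) : Set (EuclideanSpace ℝ (Fin N))) K :=
          infDist_le_hausdorffDist_of_mem (hA2 k i) (hfin k)
      _ ≤ C := by rw [← NonemptyCompacts.dist_eq]; exact hCb k
  have hcpt : IsCompact (Set.univ.pi fun _ : Fin (d+1) =>
      cthickening C (K : Set (EuclideanSpace ℝ (Fin N)))) :=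
    isCompact_univ_pi fun _ => K.isCompact.cthickening
  obtain ⟨Al, _, φ, hφmono, hφtend⟩ :=
    hcpt.tendsto_subseq (x := A) (fun k => Set.mem_univ_pi.2 fun i => hmem k i)
  have htendi : ∀ i, Filter.Tendsto (fun k => A (φ k) i) Filter.atTop (nhds (Al i)) :=
    fun i => ((continuous_apply i).tendsto Al).comp hφtend
  refine ⟨Al, ?_, ?_, ?_⟩
  · intro i j hij
    exact ge_of_tendsto' ((htendi i).dist (htendi j)) (fun k => hA1 (φ k) i j hij)
  · intro i
    have h0 : infDist (Al i) (K : Set (EuclideanSpace ℝ (Fin N))) ≤ 0 := by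
      refine le_of_tendsto_of_tendsto'
        (((continuous_infDist_pt (K : Set (EuclideanSpace ℝ (Fin N)))).tendsto _).comp (htendi i))
        (hε.comp hφmono.tendsto_atTop) (fun k => ?_)
      calc infDist (A (φ k) i) (K : Set (EuclideanSpace ℝ (Fin N)))
          ≤ hausdorffDist ((Ks (φ k)) : Set (EuclideanSpace ℝ (Fin N))) K :=
            infDist_le_hausdorffDist_of_mem (hA2 (φ k) i) (hfin (φ k))
        _ ≤ dist (Ks (φ k)) K := by rw [NonemptyCompacts.dist_eq]
    exact (K.isCompact.isClosed.mem_iff_infDist_zero K.nonempty).2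
      (le_antisymm h0 infDist_nonneg)
  · have hcl : IsClosed {p : Fin (d+1) → EuclideanSpace ℝ (Fin N) | AffineIndependent ℝ p}ᶜ :=
      (isOpen_affInd N d).isClosed_compl
    exact hcl.mem_of_tendsto hφtend (Filter.Eventually.of_forall fun k => hA3 (φ k))



lemma avoid {ι : Type*} [Finite ι] (S : ι → AffineSubspace ℝ (EuclideanSpace ℝ (Fin N)))
    (hS : ∀ i, S i ≠ ⊤) (a : EuclideanSpace ℝ (Fin N)) {δ : ℝ} (hδ : 0 < δ) :
    ∃ y, dist y a < δ ∧ ∀ i, y ∉ S i := by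
  have := Finite.to_countable (α := ι)
  have h0 : volume (⋃ i, (S i : Set (EuclideanSpace ℝ (Fin N)))) = 0 :=
    measure_iUnion_null_iff.2 fun i => Measure.addHaar_affineSubspace volume (S i) (hS i)
  have hb : 0 < volume (ball a δ) := measure_ball_pos _ _ hδ
  by_contra h
  push_neg at h
  have hsub : ball a δ ⊆ ⋃ i, (S i : Set (EuclideanSpace ℝ (Fin N))) := by
    intro y hy
    rcases h y (mem_ball.1 hy) with ⟨i, hi⟩
    exact mem_iUnion.2 ⟨i, hi⟩
  exact hb.ne' (le_antisymm (h0 ▸ measure_mono hsub) zero_le)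

lemma span_ne_top (hN : 1 ≤ N) {M : ℕ} (B : Fin M → EuclideanSpace ℝ (Fin N))
    (t : Finset (Fin M)) (ht : t.card ≤ N) :
    affineSpan ℝ (B '' ↑t) ≠ ⊤ := by
  classical
  intro h
  have hd : Module.finrank ℝ (vectorSpan ℝ (B '' ↑t)) = N := by
    rw [← direction_affineSpan, h, AffineSubspace.direction_top]
    simp
  rcases t.eq_empty_or_nonempty with rfl | hne
  · rw [Finset.coe_empty, Set.image_empty, vectorSpan_empty] at hd
    simp only [finrank_bot] at hd
    omega
  · have hc : t.card = (t.card - 1) + 1 := by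
      have := Finset.card_pos.2 hne; omega
    have h2 := finrank_vectorSpan_image_finset_le ℝ B t hc
    rw [Finset.coe_image] at h2
    rw [hd] at h2
    omega

def GP {M : ℕ} (N : ℕ) (B : Fin M → EuclideanSpace ℝ (Fin N)) : Prop :=
  ∀ m : ℕ, m ≤ N → ∀ g : Fin (m+1) ↪ Fin M, AffineIndependent ℝ (B ∘ g)


lemma snoc_of_ne_last {α : Type*} {M : ℕ} (B : Fin M → α) (y : α) {i : Fin (M+1)}
    (h : i ≠ Fin.last M) : (Fin.snoc B y : Fin (M+1) → α) i = B (i.castPred h) := by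
  obtain ⟨j, rfl⟩ := Fin.exists_castSucc_eq.mpr h
  rw [Fin.snoc_castSucc, Fin.castPred_castSucc]

lemma exists_gp (hN : 1 ≤ N) (M : ℕ) (F : Fin M → E) {δ : ℝ} (hδ : 0 < δ) :
    ∃ B : Fin M → E, GP N B ∧ ∀ j, dist (B j) (F j) < δ := by
  classical
  induction M with
  | zero => exact ⟨F, fun m hm g => (g 0).elim0, fun j => j.elim0⟩
  | succ M ih =>
    obtain ⟨B, hB, hBd⟩ := ih (F ∘ Fin.castSucc)
    obtain ⟨y, hy, hyS⟩ := avoid (ι := {t : Finset (Fin M) // t.card ≤ N})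
      (fun t => affineSpan ℝ (B '' ↑t.1)) (fun t => span_ne_top hN B t.1 t.2) (F (Fin.last M)) hδ
    refine ⟨Fin.snoc B y, ?_, ?_⟩
    · intro m hm g
      by_cases hlast : ∀ x, g x ≠ Fin.last M
      · have heq : (Fin.snoc B y : Fin (M+1) → E) ∘ g
            = B ∘ (fun x => (g x).castPred (hlast x)) := by
          funext x
          simp only [Function.comp_apply]
          exact snoc_of_ne_last B y (hlast x)
        have hinj : Function.Injective fun x => (g x).castPred (hlast x) := by
          intro a b hab
          apply g.injective
          have h2 := congrArg Fin.castSucc hab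
          rwa [Fin.castSucc_castPred, Fin.castSucc_castPred] at h2
        rw [heq]
        exact hB m hm ⟨_, hinj⟩
      · push_neg at hlast
        obtain ⟨i₀, hi₀⟩ := hlast
        have hne : ∀ x : Fin (m+1), x ≠ i₀ → g x ≠ Fin.last M := fun x hx hgx =>
          hx (g.injective (hgx.trans hi₀.symm))
        -- the finset of indices
        set s : Finset (Fin (m+1)) := Finset.univ.filter (fun x => x ≠ i₀) with hs
        have hmem_ne : ∀ x : {x // x ∈ s}, (x : Fin (m+1)) ≠ i₀ := fun x =>
          (Finset.mem_filter.1 x.2).2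
        set t : Finset (Fin M) :=
          s.attach.image (fun x => (g x.1).castPred (hne x.1 (hmem_ne x))) with hts
        have htcard : t.card ≤ N := by
          have h1 : t.card ≤ s.attach.card := Finset.card_image_le
          rw [Finset.card_attach] at h1
          have h2 : s.card = m := by
            rw [hs, Finset.filter_ne', Finset.card_erase_of_mem (Finset.mem_univ _),
              Finset.card_univ, Fintype.card_fin]
            omega
          omega
        apply AffineIndependent.affineIndependent_of_notMem_span (i := i₀)
        · rcases m with _ | m'
          · haveI : Subsingleton {yy : Fin 1 // yy ≠ i₀} :=
              ⟨fun a b => Subtype.ext (Subsingleton.elim _ _)⟩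
            exact affineIndependent_of_subsingleton ℝ _
          · have key : AffineIndependent ℝ
                ((fun x : {yy : Fin (m'+2) // yy ≠ i₀} =>
                  ((Fin.snoc B y : Fin (M+1) → E) ∘ g) x) ∘ (finSuccAboveEquiv i₀)) := by
              have heq : ((fun x : {yy : Fin (m'+2) // yy ≠ i₀} =>
                    ((Fin.snoc B y : Fin (M+1) → E) ∘ g) x) ∘ (finSuccAboveEquiv i₀))
                  = B ∘ (fun x : Fin (m'+1) =>
                      (g (finSuccAboveEquiv i₀ x)).castPred
                        (hne _ (finSuccAboveEquiv i₀ x).2)) := by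
                funext x
                simp only [Function.comp_apply]
                exact snoc_of_ne_last B y (hne _ (finSuccAboveEquiv i₀ x).2)
              rw [heq]
              have hinj : Function.Injective (fun x : Fin (m'+1) =>
                  (g (finSuccAboveEquiv i₀ x)).castPred
                    (hne _ (finSuccAboveEquiv i₀ x).2)) := by
                intro a b hab
                have h2 := congrArg Fin.castSucc hab
                rw [Fin.castSucc_castPred, Fin.castSucc_castPred] at h2
                exact (finSuccAboveEquiv i₀).injective (Subtype.ext (g.injective h2))
              exact hB m' (by omega) ⟨_, hinj⟩
            exact (affineIndependent_equiv _).1 key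
        · intro hmemspan
          have hsub : ((Fin.snoc B y : Fin (M+1) → E) ∘ g) '' {x | x ≠ i₀} ⊆ B '' ↑t := by
            rintro _ ⟨x, hx, rfl⟩
            refine ⟨(g x).castPred (hne x hx), ?_, ?_⟩
            · rw [hts]
              simp only [Finset.coe_image, Set.mem_image]
              refine ⟨⟨x, by rw [hs]; exact Finset.mem_filter.2 ⟨Finset.mem_univ _, hx⟩⟩,
                by simp, rfl⟩
            · simp only [Function.comp_apply]
              exact (snoc_of_ne_last B y (hne x hx)).symm
          have hy' : ((Fin.snoc B y : Fin (M+1) → E) ∘ g) i₀ = y := by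
            simp only [Function.comp_apply, hi₀, Fin.snoc_last]
          rw [hy'] at hmemspan
          exact hyS ⟨t, htcard⟩ ((affineSpan_mono ℝ hsub) hmemspan)
    · intro j
      refine Fin.lastCases ?_ ?_ j
      · rw [Fin.snoc_last]; exact hy
      · intro i
        rw [Fin.snoc_castSucc]
        exact hBd i

def GoodSet (N : ℕ) : Set (NonemptyCompacts (EuclideanSpace ℝ (Fin N))) :=
  {K | ∀ d : ℕ, d ≤ N → ∀ A : Fin (d + 1) → EuclideanSpace ℝ (Fin N),
    Function.Injective A → (∀ m, A m ∈ (K : Set (EuclideanSpace ℝ (Fin N)))) →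
      AffineIndependent ℝ A}

lemma goodSet_eq (N : ℕ) :
    GoodSet N = ⋂ (p : Fin (N+1) × ℕ), (Bad N p.1 p.2)ᶜ := by
  ext K
  simp only [Set.mem_iInter, Set.mem_compl_iff, GoodSet, Set.mem_setOf_eq]
  constructor
  · rintro hK ⟨d, n⟩ ⟨A, h1, h2, h3⟩
    have hinj : Function.Injective A := fun i j hij => by
      by_contra hne
      have h := h1 i j hne
      rw [hij, dist_self] at h
      have hpos : (0:ℝ) < 1/((n:ℝ)+1) := by positivity
      linarith
    exact h3 (hK d (Nat.lt_succ_iff.1 d.isLt) A hinj h2)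
  · intro hK d hd A hinj hmem
    by_contra hnid
    rcases d with _ | d'
    · haveI : Subsingleton (Fin (0+1)) := ⟨fun a b => Fin.ext (by omega)⟩
      exact hnid (affineIndependent_of_subsingleton ℝ A)
    · obtain ⟨p, hp, hmin⟩ := Finset.exists_min_image
        (Finset.univ.filter (fun q : Fin (d'+2) × Fin (d'+2) => q.1 ≠ q.2))
        (fun q => dist (A q.1) (A q.2)) ⟨(0,1), by simp⟩
      have hp' : p.1 ≠ p.2 := (Finset.mem_filter.1 hp).2
      have hcpos : 0 < dist (A p.1) (A p.2) := dist_pos.2 (fun h => hp' (hinj h))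
      obtain ⟨n, hn⟩ := exists_nat_one_div_lt hcpos
      refine hK (⟨d'+1, by omega⟩, n) ⟨A, ?_, hmem, hnid⟩
      intro i j hij
      refine le_trans hn.le (hmin (i,j) ?_)
      exact Finset.mem_filter.2 ⟨Finset.mem_univ _, hij⟩

lemma isGδ_good (N : ℕ) : IsGδ (GoodSet N) := by
  rw [goodSet_eq]
  exact IsGδ.iInter_of_isOpen fun p => (isClosed_bad N p.1 p.2).isOpen_compl

lemma dense_good (hN : 1 ≤ N) : Dense (GoodSet N) := by
  rw [Metric.dense_iff]
  intro K ε hε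
  have hε3 : 0 < ε/3 := by linarith
  obtain ⟨b', hb'K, hfin, hcov⟩ := K.isCompact.elim_finite_subcover_image
    (b := (K : Set E)) (c := fun x => ball x (ε/3))
    (fun x _ => isOpen_ball)
    (fun x hx => Set.mem_biUnion hx (mem_ball_self hε3))
  obtain ⟨M, f, hfr⟩ := hfin.fin_embedding
  obtain ⟨B, hGP, hBd⟩ := exists_gp hN M f hε3
  haveI hFM : Nonempty (Fin M) := by
    obtain ⟨x₀, hx₀⟩ := K.nonempty
    have h := hcov hx₀
    rw [Set.mem_iUnion₂] at h
    obtain ⟨i, hi, -⟩ := h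
    rw [← hfr] at hi
    obtain ⟨j, -⟩ := hi
    exact ⟨j⟩
  refine ⟨⟨⟨Set.range B, (Set.finite_range B).isCompact⟩, Set.range_nonempty B⟩, ?_, ?_⟩
  · rw [Metric.mem_ball, NonemptyCompacts.dist_eq]
    have hle : hausdorffDist (Set.range B) (K : Set E) ≤ 2*ε/3 := by
      apply hausdorffDist_le_of_mem_dist (by linarith)
      · rintro _ ⟨j, rfl⟩
        refine ⟨f j, hb'K (hfr ▸ Set.mem_range_self j), ?_⟩
        have := hBd j
        linarith [hBd j]
      · intro x hx
        have h := hcov hx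
        rw [Set.mem_iUnion₂] at h
        obtain ⟨i, hi, hxi⟩ := h
        rw [← hfr] at hi
        obtain ⟨j, rfl⟩ := hi
        refine ⟨B j, Set.mem_range_self j, ?_⟩
        have h1 : dist x (f j) < ε/3 := mem_ball.1 hxi
        have h2 : dist (B j) (f j) < ε/3 := hBd j
        calc dist x (B j) ≤ dist x (f j) + dist (f j) (B j) := dist_triangle _ _ _
          _ ≤ 2*ε/3 := by rw [dist_comm (f j) (B j)]; linarith
    exact lt_of_le_of_lt hle (by linarith)
  · intro d hd A hinjA hmemA
    have hch : ∀ m, ∃ j, B j = A m := fun m => hmemA m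
    choose g hg using hch
    have hginj : Function.Injective g := fun a b hab =>
      hinjA (by rw [← hg a, ← hg b, hab])
    have hAeq : A = B ∘ (⟨g, hginj⟩ : Fin (d+1) ↪ Fin M) :=
      funext fun m => (hg m).symm
    rw [hAeq]
    exact hGP d hd _

end StmtAux

open TopologicalSpace

theorem stmt6 (N : ℕ) (hN : 2 ≤ N) :
    Dense {K : NonemptyCompacts (EuclideanSpace ℝ (Fin N)) |
      ∀ d : ℕ, d ≤ N → ∀ A : Fin (d + 1) → EuclideanSpace ℝ (Fin N),
        Function.Injective A → (∀ m, A m ∈ (K : Set (EuclideanSpace ℝ (Fin N)))) →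
          AffineIndependent ℝ A} ∧
    IsGδ {K : NonemptyCompacts (EuclideanSpace ℝ (Fin N)) |
      ∀ d : ℕ, d ≤ N → ∀ A : Fin (d + 1) → EuclideanSpace ℝ (Fin N),
        Function.Injective A → (∀ m, A m ∈ (K : Set (EuclideanSpace ℝ (Fin N)))) →
          AffineIndependent ℝ A} := by
  exact ⟨StmtAux.dense_good (by omega), StmtAux.isGδ_good N⟩
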